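/- Let π₁ be the policy defined by π₁(a) = n(a)/n(p(a)) for every a ∈ A. Then for every reduced strategy σ ∈ S, Σ_{a∈A(σ)} ln(π₁(a)) = −ln(n(r)); equivalently, ∏_{a∈A(σ)} π₁(a) = 1/|S|, so the uniform distribution over reduced strategies is induced. -/

import Mathlib

open scoped Classical

/-- A finite rooted tree whose internal nodes are partitioned into infosets `N`
and actions `A`: the root is an infoset, every child of an infoset is an action,
every child of an action is an infoset or a leaf, and every infoset has at
least two children.  The tree structure is given by a parent function together
with a depth function witnessing well-foundedness. -/
structure EFTree (V : Type*) [Fintype V] [DecidableEq V] where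
  root : V
  parent : V → V
  parent_root : parent root = root
  depth : V → ℕ
  depth_root : depth root = 0
  depth_parent : ∀ v : V, v ≠ root → depth v = depth (parent v) + 1
  N : Finset V
  A : Finset V
  disj : Disjoint N A
  internal_iff : ∀ v : V, (v ∈ N ∨ v ∈ A) ↔ ∃ u : V, u ≠ root ∧ parent u = v
  root_N : root ∈ N
  infoset_child : ∀ u : V, u ≠ root → parent u ∈ N → u ∈ A
  action_child : ∀ u : V, u ≠ root → parent u ∈ A → u ∉ A
  branching : ∀ v ∈ N, 1 < (Finset.univ.filter fun u => u ≠ root ∧ parent u = v).card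

namespace EFTree

variable {V : Type*} [Fintype V] [DecidableEq V] (T : EFTree V)

/-- The set `C(v)` of children of a node `v`. -/
def children (v : V) : Finset V := Finset.univ.filter fun u => u ≠ T.root ∧ T.parent u = v

/-- The set `L` of leaves: the nodes that are neither infosets nor actions. -/
def leaves : Finset V := Finset.univ \ (T.N ∪ T.A)

/-- `Desc u v` means `u` is a descendant of `v` (every node is a descendant of itself). -/
def Desc (u v : V) : Prop := ∃ k : ℕ, T.parent^[k] u = v

/-- The reachable set `V(σ)` of a (sub-)strategy `σ` started at the node `w`:
the minimal set of nodes containing `w`, containing `σ v` for every infoset `v`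
in the set, and containing all children of every action in the set. -/
def reachFrom (w : V) (σ : V → V) : Set V :=
  ⋂₀ {s : Set V | w ∈ s ∧ (∀ v ∈ T.N, v ∈ s → σ v ∈ s) ∧
      ∀ a ∈ T.A, a ∈ s → ∀ u ∈ T.children a, u ∈ s}

/-- The reachable set `V(σ)` of a strategy `σ`. -/
def reachS (σ : V → V) : Set V := T.reachFrom T.root σ

/-- `σ : V → V` canonically represents a reduced sub-strategy at the node `w`:
at every infoset in its reachable set it selects a child, and everywhere else it
is the identity (so that each reduced sub-strategy, i.e. each restriction of a
sub-strategy at `w` to the infosets it can reach, has exactly one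
representative). -/
def IsRedSubStrat (w : V) (σ : V → V) : Prop :=
  (∀ v ∈ T.N, v ∈ T.reachFrom w σ → σ v ∈ T.children v) ∧
  ∀ v : V, ¬(v ∈ T.N ∧ v ∈ T.reachFrom w σ) → σ v = v

/-- `σ : V → V` canonically represents a reduced strategy, i.e. a member of `S`. -/
def IsRedStrat (σ : V → V) : Prop := T.IsRedSubStrat T.root σ

/-- The set `A(σ) = A ∩ V(σ)` of actions reachable under a reduced (sub-)strategy. -/
noncomputable def Aset (σ : V → V) : Finset V := T.A.filter fun a => a ∈ T.reachS σ

/-- The set `A(σ) = A ∩ V(σ)` for a reduced sub-strategy at `w`. -/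
noncomputable def AsetFrom (w : V) (σ : V → V) : Finset V := T.A.filter fun a => a ∈ T.reachFrom w σ

/-- An environment chooses a child of every action. -/
def IsEnv (μ : V → V) : Prop := ∀ a ∈ T.A, μ a ∈ T.children a

/-- The reachable set `V(μ)` of an environment `μ`: the minimal set of nodes
containing the root, all children of every infoset in the set, and `μ a` for
every action `a` in the set. -/
def reachE (μ : V → V) : Set V :=
  ⋂₀ {s : Set V | T.root ∈ s ∧ (∀ v ∈ T.N, v ∈ s → ∀ u ∈ T.children v, u ∈ s) ∧
      ∀ a ∈ T.A, a ∈ s → μ a ∈ s}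

/-- `Z(μ)`: the set of actions reachable under `μ` whose chosen child is a leaf. -/
noncomputable def Zset (μ : V → V) : Finset V := T.A.filter fun a => a ∈ T.reachE μ ∧ μ a ∈ T.leaves

/-- A policy assigns to each action a probability in `[0,1]`, summing to one
over the children of each infoset. -/
def IsPolicy (π : V → ℝ) : Prop :=
  (∀ a ∈ T.A, 0 ≤ π a ∧ π a ≤ 1) ∧ ∀ v ∈ T.N, ∑ a ∈ T.children v, π a = 1

/-- The root-to-leaf path traversed when the reduced strategy `σ` is played
against the environment `μ`: the minimal set of nodes containing the root,
containing `σ v` for every infoset `v` in the set, and `μ a` for every action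
`a` in the set. -/
def playPath (σ μ : V → V) : Set V :=
  ⋂₀ {s : Set V | T.root ∈ s ∧ (∀ v ∈ T.N, v ∈ s → σ v ∈ s) ∧
      ∀ a ∈ T.A, a ∈ s → μ a ∈ s}

/-- `z` is the last action node on the play path of `(σ, μ)`: it is an action on
the path of which every other action on the path is an ancestor. -/
def IsLastAction (σ μ : V → V) (z : V) : Prop :=
  z ∈ T.A ∧ z ∈ T.playPath σ μ ∧ ∀ a ∈ T.A, a ∈ T.playPath σ μ → T.Desc z a

end EFTree
namespace EFTree

variable {V : Type*} [Fintype V] [DecidableEq V] (T : EFTree V)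

lemma mem_children {u v : V} : u ∈ T.children v ↔ u ≠ T.root ∧ T.parent u = v := by
  simp [children]

lemma depth_eq_zero_iff {v : V} : T.depth v = 0 ↔ v = T.root := by
  constructor
  · intro h
    by_contra hv
    have := T.depth_parent v hv
    omega
  · rintro rfl; exact T.depth_root

lemma iterate_root (k : ℕ) : T.parent^[k] T.root = T.root := by
  induction k with
  | zero => rfl
  | succ k ih => rw [Function.iterate_succ_apply', ih, T.parent_root]

lemma desc_depth : ∀ (k : ℕ) (x u : V), T.parent^[k] x = u →
    u = T.root ∨ T.depth x = T.depth u + k := by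
  intro k
  induction k with
  | zero => intro x u h; right; simp only [Function.iterate_zero, id_eq] at h; subst h; omega
  | succ k ih =>
    intro x u h
    rw [Function.iterate_succ_apply] at h
    by_cases hx : x = T.root
    · left
      subst hx
      rw [T.parent_root] at h
      rw [← h, T.iterate_root]
    · rcases ih (T.parent x) u h with h1 | h1
      · exact Or.inl h1
      · right
        rw [T.depth_parent x hx]
        omega

lemma desc_unique {x u u' : V} (h : T.Desc x u) (h' : T.Desc x u')
    (hd : T.depth u = T.depth u') : u = u' := by
  obtain ⟨k, hk⟩ := h
  obtain ⟨k', hk'⟩ := h'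
  rcases T.desc_depth k x u hk with h1 | h1
  · rcases T.desc_depth k' x u' hk' with h2 | h2
    · rw [h1, h2]
    · subst h1
      rw [T.depth_root] at hd
      have : u' = T.root := T.depth_eq_zero_iff.mp hd.symm
      rw [this]
  · rcases T.desc_depth k' x u' hk' with h2 | h2
    · subst h2
      rw [T.depth_root] at hd
      have : u = T.root := T.depth_eq_zero_iff.mp hd
      rw [this]
    · have : k = k' := by omega
      subst this
      rw [← hk, ← hk']

lemma not_desc_of_child {u v : V} (hu : u ∈ T.children v) : ¬ T.Desc v u := by
  rw [T.mem_children] at hu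
  rintro ⟨k, hk⟩
  rcases T.desc_depth k v u hk with h1 | h1
  · exact hu.1 h1
  · have : T.depth u = T.depth v + 1 := by
      rw [← hu.2]; exact T.depth_parent u hu.1
    omega

lemma depth_iterate {x : V} : ∀ i, i ≤ T.depth x →
    T.depth (T.parent^[i] x) = T.depth x - i := by
  intro i
  induction i with
  | zero => simp
  | succ i ih =>
    intro h
    rw [Function.iterate_succ_apply']
    set y := T.parent^[i] x with hy
    have hdy : T.depth y = T.depth x - i := ih (by omega)
    have hyroot : y ≠ T.root := by
      intro hc
      rw [hc, T.depth_root] at hdy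
      omega
    have := T.depth_parent y hyroot
    omega

lemma depth_lt_card (w : V) : T.depth w < Fintype.card V := by
  have hinj : Function.Injective (fun i : Fin (T.depth w + 1) => T.parent^[(i : ℕ)] w) := by
    intro i j hij
    simp only at hij
    have hi := T.depth_iterate (x := w) i (by omega)
    have hj := T.depth_iterate (x := w) j (by omega)
    rw [hij] at hi
    have : (i : ℕ) = (j : ℕ) := by omega
    exact Fin.ext this
  have := Fintype.card_le_of_injective _ hinj
  simp at this
  omega

lemma parent_mem_N {a : V} (ha : a ∈ T.A) : a ≠ T.root ∧ T.parent a ∈ T.N := by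
  have hne : a ≠ T.root := by
    intro h; subst h
    exact absurd ha (Finset.disjoint_left.mp T.disj T.root_N)
  refine ⟨hne, ?_⟩
  have : T.parent a ∈ T.N ∨ T.parent a ∈ T.A :=
    (T.internal_iff (T.parent a)).mpr ⟨a, hne, rfl⟩
  rcases this with h | h
  · exact h
  · exact absurd ha (T.action_child a hne h)

lemma child_of_N {v u : V} (hv : v ∈ T.N) (hu : u ∈ T.children v) : u ∈ T.A := by
  rw [T.mem_children] at hu
  exact T.infoset_child u hu.1 (hu.2 ▸ hv)

lemma child_of_A_not_A {a u : V} (ha : a ∈ T.A) (hu : u ∈ T.children a) : u ∉ T.A := by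
  rw [T.mem_children] at hu
  exact T.action_child u hu.1 (hu.2 ▸ ha)

section Reach

variable {T}

/-- The closure conditions defining `reachFrom`. -/
def ReachClosed (T : EFTree V) (w : V) (σ : V → V) (s : Set V) : Prop :=
  w ∈ s ∧ (∀ v ∈ T.N, v ∈ s → σ v ∈ s) ∧
    ∀ a ∈ T.A, a ∈ s → ∀ u ∈ T.children a, u ∈ s

lemma reachFrom_eq_sInter (w : V) (σ : V → V) :
    T.reachFrom w σ = ⋂₀ {s : Set V | ReachClosed T w σ s} := rfl

lemma reach_subset {w : V} {σ : V → V} {s : Set V} (hs : ReachClosed T w σ s) :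
    T.reachFrom w σ ⊆ s := Set.sInter_subset_of_mem hs

lemma reach_closed (w : V) (σ : V → V) : ReachClosed T w σ (T.reachFrom w σ) := by
  refine ⟨?_, ?_, ?_⟩
  · intro s hs; exact hs.1
  · intro v hv hvr s hs
    exact hs.2.1 v hv (hvr s hs)
  · intro a ha har u hu s hs
    exact hs.2.2 a ha (har s hs) u hu

lemma self_mem_reach (w : V) (σ : V → V) : w ∈ T.reachFrom w σ :=
  (reach_closed w σ).1

lemma reach_mono {w u : V} {σ : V → V} (hu : u ∈ T.reachFrom w σ) :
    T.reachFrom u σ ⊆ T.reachFrom w σ :=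
  reach_subset ⟨hu, (reach_closed w σ).2.1, (reach_closed w σ).2.2⟩

lemma reach_congr_aux {w : V} {σ σ' : V → V}
    (h : ∀ v ∈ T.N, v ∈ T.reachFrom w σ → σ' v = σ v) :
    T.reachFrom w σ' ⊆ T.reachFrom w σ := by
  apply reach_subset
  refine ⟨(reach_closed w σ).1, ?_, (reach_closed w σ).2.2⟩
  intro v hv hvr
  rw [h v hv hvr]
  exact (reach_closed w σ).2.1 v hv hvr

lemma reach_congr {w : V} {σ σ' : V → V}
    (h : ∀ v ∈ T.N, v ∈ T.reachFrom w σ → σ' v = σ v) :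
    T.reachFrom w σ' = T.reachFrom w σ := by
  have h1 : T.reachFrom w σ' ⊆ T.reachFrom w σ := reach_congr_aux h
  refine le_antisymm h1 (reach_congr_aux ?_)
  intro v hv hvr
  exact (h v hv (h1 hvr)).symm

lemma reach_leaf {w : V} (hN : w ∉ T.N) (hA : w ∉ T.A) (σ : V → V) :
    T.reachFrom w σ = {w} := by
  apply le_antisymm
  · apply reach_subset
    refine ⟨rfl, ?_, ?_⟩
    · intro v hv hvr
      rw [Set.mem_singleton_iff] at hvr; subst hvr; exact absurd hv hN
    · intro a ha har
      rw [Set.mem_singleton_iff] at har; subst har; exact absurd ha hA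
  · intro x hx
    rw [Set.mem_singleton_iff] at hx; rw [hx]
    exact self_mem_reach w σ

lemma reach_decomp_N {w : V} (hw : w ∈ T.N) (σ : V → V) :
    T.reachFrom w σ = insert w (T.reachFrom (σ w) σ) := by
  apply le_antisymm
  · apply reach_subset
    refine ⟨Set.mem_insert _ _, ?_, ?_⟩
    · intro v hv hvr
      rcases hvr with h | h
      · subst h
        exact Set.mem_insert_of_mem _ (self_mem_reach (σ v) σ)
      · exact Set.mem_insert_of_mem _ ((reach_closed (σ w) σ).2.1 v hv h)
    · intro a ha har u hu
      rcases har with h | h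
      · subst h; exact absurd ha (Finset.disjoint_left.mp T.disj hw)
      · exact Set.mem_insert_of_mem _ ((reach_closed (σ w) σ).2.2 a ha h u hu)
  · intro x hx
    rcases hx with h | h
    · rw [h]; exact self_mem_reach w σ
    · exact reach_mono ((reach_closed w σ).2.1 w hw (self_mem_reach w σ)) h

lemma reach_decomp_A {a : V} (ha : a ∈ T.A) (σ : V → V) :
    T.reachFrom a σ = insert a (⋃ u ∈ T.children a, T.reachFrom u σ) := by
  apply le_antisymm
  · apply reach_subset
    refine ⟨Set.mem_insert _ _, ?_, ?_⟩
    · intro v hv hvr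
      rcases hvr with h | h
      · subst h; exact absurd hv (Finset.disjoint_right.mp T.disj ha)
      · simp only [Set.mem_iUnion] at h
        obtain ⟨u, hu, hr⟩ := h
        apply Set.mem_insert_of_mem
        simp only [Set.mem_iUnion]
        exact ⟨u, hu, (reach_closed u σ).2.1 v hv hr⟩
    · intro b hb hbr u hu
      rcases hbr with h | h
      · subst h
        apply Set.mem_insert_of_mem
        simp only [Set.mem_iUnion]
        exact ⟨u, hu, self_mem_reach u σ⟩
      · simp only [Set.mem_iUnion] at h
        obtain ⟨u', hu', hr⟩ := h
        apply Set.mem_insert_of_mem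
        simp only [Set.mem_iUnion]
        exact ⟨u', hu', (reach_closed u' σ).2.2 b hb hr u hu⟩
  · intro x hx
    rcases hx with h | h
    · rw [h]; exact self_mem_reach a σ
    · simp only [Set.mem_iUnion] at h
      obtain ⟨u, hu, hr⟩ := h
      exact reach_mono ((reach_closed a σ).2.2 a ha (self_mem_reach a σ) u hu) hr

/-- `σ` is a proper sub-strategy viewed from `w`. -/
def Proper (T : EFTree V) (w : V) (σ : V → V) : Prop :=
  ∀ v ∈ T.N, v ∈ T.reachFrom w σ → σ v ∈ T.children v

lemma proper_mono {w u : V} {σ : V → V} (h : Proper T w σ) (hu : u ∈ T.reachFrom w σ) :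
    Proper T u σ := fun v hv hvr => h v hv (reach_mono hu hvr)

lemma reach_desc {w : V} {σ : V → V} (h : Proper T w σ) :
    T.reachFrom w σ ⊆ {x | T.Desc x w} := by
  have : T.reachFrom w σ ⊆ T.reachFrom w σ ∩ {x | T.Desc x w} := by
    apply reach_subset
    refine ⟨⟨self_mem_reach w σ, ⟨0, rfl⟩⟩, ?_, ?_⟩
    · intro v hv hvr
      obtain ⟨hvr1, k, hk⟩ := hvr
      refine ⟨(reach_closed w σ).2.1 v hv hvr1, k + 1, ?_⟩
      have hc := h v hv hvr1
      rw [T.mem_children] at hc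
      rw [Function.iterate_succ_apply, hc.2, hk]
    · intro a ha har u hu
      obtain ⟨har1, k, hk⟩ := har
      refine ⟨(reach_closed w σ).2.2 a ha har1 u hu, k + 1, ?_⟩
      rw [T.mem_children] at hu
      rw [Function.iterate_succ_apply, hu.2, hk]
  intro x hx
  exact (this hx).2

lemma not_mem_reach_child {v u : V} {σ : V → V} (hu : u ∈ T.children v)
    (h : Proper T u σ) : v ∉ T.reachFrom u σ := by
  intro hc
  exact T.not_desc_of_child hu (reach_desc h hc)

lemma sibling_reach_disjoint {a u₁ u₂ : V} {σ₁ σ₂ : V → V}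
    (hu₁ : u₁ ∈ T.children a) (hu₂ : u₂ ∈ T.children a) (hne : u₁ ≠ u₂)
    (h₁ : Proper T u₁ σ₁) (h₂ : Proper T u₂ σ₂) {x : V}
    (hx₁ : x ∈ T.reachFrom u₁ σ₁) (hx₂ : x ∈ T.reachFrom u₂ σ₂) : False := by
  have d₁ : T.Desc x u₁ := reach_desc h₁ hx₁
  have d₂ : T.Desc x u₂ := reach_desc h₂ hx₂
  rw [T.mem_children] at hu₁ hu₂
  have e₁ := T.depth_parent u₁ hu₁.1
  have e₂ := T.depth_parent u₂ hu₂.1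
  rw [hu₁.2] at e₁
  rw [hu₂.2] at e₂
  exact hne (T.desc_unique d₁ d₂ (by omega))

end Reach
section Counting

variable {T}
variable {n : V → ℕ}

lemma n_pos (hnA : ∀ a ∈ T.A, n a = ∏ v ∈ (T.children a).filter (· ∈ T.N), n v)
    (hnN : ∀ v ∈ T.N, n v = ∑ a ∈ T.children v, n a) :
    ∀ w : V, w ∈ T.N ∨ w ∈ T.A → 1 ≤ n w := by
  suffices h : ∀ k : ℕ, ∀ w : V, Fintype.card V ≤ T.depth w + k →
      (w ∈ T.N ∨ w ∈ T.A → 1 ≤ n w) by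
    intro w hw
    exact h (Fintype.card V) w (by omega) hw
  intro k
  induction k with
  | zero =>
    intro w hw
    have := T.depth_lt_card w
    omega
  | succ k ih =>
    intro w hw hmem
    have hchild : ∀ u ∈ T.children w, Fintype.card V ≤ T.depth u + k := by
      intro u hu
      rw [T.mem_children] at hu
      have := T.depth_parent u hu.1
      rw [hu.2] at this
      omega
    rcases hmem with hN | hA
    · rw [hnN w hN]
      have hcard := T.branching w hN
      have hne : (T.children w).Nonempty := by
        rw [← Finset.card_pos]
        have hcc : (T.children w).card =
            (Finset.univ.filter fun u => u ≠ T.root ∧ T.parent u = w).card := rfl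
        omega
      obtain ⟨a, ha⟩ := hne
      calc 1 ≤ n a := ih a (hchild a ha) (Or.inr (T.child_of_N hN ha))
        _ ≤ ∑ b ∈ T.children w, n b :=
          Finset.single_le_sum (fun b _ => Nat.zero_le _) ha
    · rw [hnA w hA]
      apply Finset.one_le_prod'
      intro u hu
      rw [Finset.mem_filter] at hu
      exact ih u (hchild u hu.1) (Or.inl hu.2)

lemma AsetFrom_leaf {w : V} (hN : w ∉ T.N) (hA : w ∉ T.A) (σ : V → V) :
    T.AsetFrom w σ = ∅ := by
  ext x
  simp only [AsetFrom, Finset.mem_filter, Finset.notMem_empty, iff_false, not_and]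
  intro hx hr
  rw [reach_leaf hN hA] at hr
  rw [Set.mem_singleton_iff] at hr
  subst hr
  exact hA hx

lemma AsetFrom_decomp {w : V} (hw : w ∈ T.N) {σ : V → V} (hp : Proper T w σ) :
    T.AsetFrom w σ =
      insert (σ w) ((T.children (σ w)).biUnion fun u => T.AsetFrom u σ) := by
  have ha₀ : σ w ∈ T.children w := hp w hw (self_mem_reach w σ)
  have ha₀A : σ w ∈ T.A := T.child_of_N hw ha₀
  ext x
  simp only [AsetFrom, Finset.mem_filter, Finset.mem_insert, Finset.mem_biUnion]
  rw [reach_decomp_N hw, reach_decomp_A ha₀A]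
  constructor
  · rintro ⟨hxA, hxr⟩
    rcases hxr with h | h | h
    · rw [h] at hxA
      exact absurd hxA (Finset.disjoint_left.mp T.disj hw)
    · exact Or.inl h
    · simp only [Set.mem_iUnion] at h
      obtain ⟨u, hu, hr⟩ := h
      exact Or.inr ⟨u, hu, hxA, hr⟩
  · rintro (h | ⟨u, hu, hxA, hr⟩)
    · rw [h]
      exact ⟨ha₀A, Or.inr (Or.inl rfl)⟩
    · refine ⟨hxA, Or.inr (Or.inr ?_)⟩
      simp only [Set.mem_iUnion]
      exact ⟨u, hu, hr⟩

lemma prod_ratio (hnA : ∀ a ∈ T.A, n a = ∏ v ∈ (T.children a).filter (· ∈ T.N), n v)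
    (hnN : ∀ v ∈ T.N, n v = ∑ a ∈ T.children v, n a) :
    ∀ k : ℕ, ∀ w ∈ T.N, ∀ σ : V → V, Proper T w σ →
      Fintype.card V ≤ T.depth w + k →
      ∏ a ∈ T.AsetFrom w σ, ((n a : ℝ) / (n (T.parent a) : ℝ)) = 1 / (n w : ℝ) := by
  intro k
  induction k with
  | zero =>
    intro w hw σ hp hk
    have := T.depth_lt_card w
    omega
  | succ k ih =>
    intro w hw σ hp hk
    have ha₀ : σ w ∈ T.children w := hp w hw (self_mem_reach w σ)
    have ha₀A : σ w ∈ T.A := T.child_of_N hw ha₀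
    have ha₀r : σ w ∈ T.reachFrom w σ :=
      (reach_closed w σ).2.1 w hw (self_mem_reach w σ)
    have hchr : ∀ u ∈ T.children (σ w), u ∈ T.reachFrom w σ := fun u hu =>
      (reach_closed w σ).2.2 (σ w) ha₀A ha₀r u hu
    have hprop : ∀ u ∈ T.children (σ w), Proper T u σ := fun u hu =>
      proper_mono hp (hchr u hu)
    rw [AsetFrom_decomp hw hp]
    have hnotin : σ w ∉ (T.children (σ w)).biUnion fun u => T.AsetFrom u σ := by
      intro hc
      rw [Finset.mem_biUnion] at hc
      obtain ⟨u, hu, hc⟩ := hc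
      simp only [AsetFrom, Finset.mem_filter] at hc
      exact not_mem_reach_child hu (hprop u hu) hc.2
    rw [Finset.prod_insert hnotin]
    have hdisj : (↑(T.children (σ w)) : Set V).PairwiseDisjoint
        fun u => T.AsetFrom u σ := by
      intro u₁ h₁ u₂ h₂ hne
      simp only [Finset.coe_mem, Finset.mem_coe] at h₁ h₂
      apply Finset.disjoint_left.mpr
      intro x hx₁ hx₂
      simp only [AsetFrom, Finset.mem_filter] at hx₁ hx₂
      exact sibling_reach_disjoint h₁ h₂ hne (hprop u₁ h₁) (hprop u₂ h₂) hx₁.2 hx₂.2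
    rw [Finset.prod_biUnion hdisj]
    have hdepth : ∀ u ∈ T.children (σ w), T.depth u = T.depth w + 2 := by
      intro u hu
      have h1 := T.mem_children.mp hu
      have h2 := T.mem_children.mp ha₀
      have e1 := T.depth_parent u h1.1
      have e2 := T.depth_parent (σ w) h2.1
      rw [h1.2] at e1
      rw [h2.2] at e2
      omega
    have hsub : ∏ u ∈ T.children (σ w), ∏ a ∈ T.AsetFrom u σ,
          ((n a : ℝ) / (n (T.parent a) : ℝ)) =
        ∏ u ∈ (T.children (σ w)).filter (· ∈ T.N), (1 / (n u : ℝ)) := by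
      rw [← Finset.prod_filter_mul_prod_filter_not (T.children (σ w)) (· ∈ T.N)]
      have h1 : ∏ u ∈ (T.children (σ w)).filter (· ∈ T.N), ∏ a ∈ T.AsetFrom u σ,
            ((n a : ℝ) / (n (T.parent a) : ℝ)) =
          ∏ u ∈ (T.children (σ w)).filter (· ∈ T.N), (1 / (n u : ℝ)) := by
        apply Finset.prod_congr rfl
        intro u hu
        rw [Finset.mem_filter] at hu
        exact ih u hu.2 σ (hprop u hu.1) (by have := hdepth u hu.1; omega)
      have h2 : ∏ u ∈ (T.children (σ w)).filter (fun u => ¬ u ∈ T.N), ∏ a ∈ T.AsetFrom u σ,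
            ((n a : ℝ) / (n (T.parent a) : ℝ)) = 1 := by
        apply Finset.prod_eq_one
        intro u hu
        rw [Finset.mem_filter] at hu
        have huA : u ∉ T.A := T.child_of_A_not_A ha₀A hu.1
        rw [AsetFrom_leaf hu.2 huA, Finset.prod_empty]
      rw [h1, h2, mul_one]
    rw [hsub]
    have hpar : T.parent (σ w) = w := (T.mem_children.mp ha₀).2
    rw [hpar]
    have hprod : ((n (σ w) : ℝ)) =
        ∏ u ∈ (T.children (σ w)).filter (· ∈ T.N), (n u : ℝ) := by
      rw [hnA (σ w) ha₀A]
      push_cast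
      rfl
    have hn0 : ∀ u ∈ (T.children (σ w)).filter (· ∈ T.N), (n u : ℝ) ≠ 0 := by
      intro u hu
      rw [Finset.mem_filter] at hu
      have := n_pos hnA hnN u (Or.inl hu.2)
      positivity
    have ha₀pos : (n (σ w) : ℝ) ≠ 0 := by
      have := n_pos hnA hnN (σ w) (Or.inr ha₀A)
      positivity
    have hwpos : (n w : ℝ) ≠ 0 := by
      have := n_pos hnA hnN w (Or.inl hw)
      positivity
    rw [Finset.prod_div_distrib]
    simp only [Finset.prod_const_one]
    rw [← hprod]
    field_simp
end Counting
section Card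

variable {T}

/-- The finset of canonical reduced sub-strategies at `w`. -/
noncomputable def Sfin (T : EFTree V) (w : V) : Finset (V → V) :=
  Finset.univ.filter (T.IsRedSubStrat w)

lemma mem_Sfin {w : V} {σ : V → V} : σ ∈ Sfin T w ↔ T.IsRedSubStrat w σ := by
  simp [Sfin]

lemma proper_of_mem_Sfin {w : V} {σ : V → V} (h : σ ∈ Sfin T w) : Proper T w σ :=
  (mem_Sfin.mp h).1

lemma Sfin_leaf {w : V} (hN : w ∉ T.N) (hA : w ∉ T.A) : Sfin T w = {id} := by
  ext σ
  rw [mem_Sfin, Finset.mem_singleton]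
  constructor
  · intro h
    funext v
    apply h.2
    rintro ⟨hv, hvr⟩
    rw [reach_leaf hN hA] at hvr
    rw [Set.mem_singleton_iff] at hvr
    rw [hvr] at hv
    exact hN hv
  · rintro rfl
    constructor
    · intro v hv hvr
      rw [reach_leaf hN hA] at hvr
      rw [Set.mem_singleton_iff] at hvr
      rw [hvr] at hv
      exact absurd hv hN
    · intro v _
      rfl

/-- Projection of a strategy onto the subtree rooted at `u`. -/
noncomputable def proj (T : EFTree V) (u : V) (σ : V → V) : V → V :=
  fun v => if v ∈ T.N ∧ v ∈ T.reachFrom u σ then σ v else v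

lemma proj_eq_of {u v : V} {σ : V → V} (hv : v ∈ T.N) (hr : v ∈ T.reachFrom u σ) :
    proj T u σ v = σ v := if_pos ⟨hv, hr⟩

lemma reach_proj (u : V) (σ : V → V) :
    T.reachFrom u (proj T u σ) = T.reachFrom u σ :=
  reach_congr fun _ hv hvr => proj_eq_of hv hvr

lemma proj_mem_Sfin {u : V} {σ : V → V} (h : Proper T u σ) :
    proj T u σ ∈ Sfin T u := by
  rw [mem_Sfin]
  constructor
  · intro v hv hvr
    rw [reach_proj] at hvr
    rw [proj_eq_of hv hvr]
    exact h v hv hvr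
  · intro v hv
    rw [reach_proj] at hv
    exact if_neg hv

lemma card_Sfin_N {w : V} (hw : w ∈ T.N) :
    (Sfin T w).card = ∑ a ∈ T.children w, (Sfin T a).card := by
  rw [← Finset.card_sigma]
  apply Finset.card_bij (fun σ _ => (⟨σ w, Function.update σ w w⟩ : (_ : V) × (V → V)))
  · -- membership
    intro σ hσ
    rw [mem_Sfin] at hσ
    have ha₀ : σ w ∈ T.children w := hσ.1 w hw (self_mem_reach w σ)
    have ha₀r : σ w ∈ T.reachFrom w σ :=
      (reach_closed w σ).2.1 w hw (self_mem_reach w σ)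
    have hprop : Proper T (σ w) σ := proper_mono hσ.1 ha₀r
    have hwnr : w ∉ T.reachFrom (σ w) σ := not_mem_reach_child ha₀ hprop
    have hre : T.reachFrom (σ w) (Function.update σ w w) = T.reachFrom (σ w) σ := by
      apply reach_congr
      intro v hv hvr
      exact Function.update_of_ne (fun hc : v = w => hwnr (by rw [hc] at hvr; exact hvr)) w σ
    rw [Finset.mem_sigma]
    refine ⟨ha₀, ?_⟩
    rw [mem_Sfin]
    constructor
    · intro v hv hvr
      rw [hre] at hvr
      have hvw : v ≠ w := fun hc : v = w => hwnr (by rw [hc] at hvr; exact hvr)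
      show Function.update σ w w v ∈ T.children v
      rw [Function.update_of_ne hvw]
      exact hσ.1 v hv (reach_mono ha₀r hvr)
    · intro v hv
      rw [hre] at hv
      show Function.update σ w w v = v
      by_cases hvw : v = w
      · rw [hvw]
        exact Function.update_self w w σ
      · rw [Function.update_of_ne hvw]
        apply hσ.2
        rintro ⟨h1, h2⟩
        rw [reach_decomp_N hw] at h2
        rcases h2 with h2 | h2
        · exact hvw h2
        · exact hv ⟨h1, h2⟩
  · -- injectivity
    intro σ hσ τ hτ heq
    simp only [Sigma.mk.inj_iff, heq_eq_eq] at heq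
    funext v
    by_cases hvw : v = w
    · rw [hvw]; exact heq.1
    · have := congrFun heq.2 v
      rwa [Function.update_of_ne hvw, Function.update_of_ne hvw] at this
  · -- surjectivity
    rintro ⟨a₀, τ⟩ hmem
    rw [Finset.mem_sigma] at hmem
    obtain ⟨ha₀, hτ⟩ := hmem
    rw [mem_Sfin] at hτ
    have hwnr : w ∉ T.reachFrom a₀ τ := not_mem_reach_child ha₀ hτ.1
    have hτw : τ w = w := hτ.2 w (fun hc => hwnr hc.2)
    set σ := Function.update τ w a₀ with hσdef
    have hσw : σ w = a₀ := Function.update_self w a₀ τ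
    have hσv : ∀ v, v ≠ w → σ v = τ v := fun v hv => Function.update_of_ne hv a₀ τ
    have hre : T.reachFrom a₀ σ = T.reachFrom a₀ τ := by
      apply reach_congr
      intro v hv hvr
      exact hσv v (fun hc : v = w => hwnr (by rw [hc] at hvr; exact hvr))
    have hreachw : T.reachFrom w σ = insert w (T.reachFrom a₀ τ) := by
      rw [reach_decomp_N hw, hσw, hre]
    refine ⟨σ, ?_, ?_⟩
    · rw [mem_Sfin]
      constructor
      · intro v hv hvr
        rw [hreachw] at hvr
        rcases hvr with h | h
        · rw [h, hσw]; exact h ▸ ha₀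
        · have hvw : v ≠ w := fun hc : v = w => hwnr (by rw [hc] at h; exact h)
          rw [hσv v hvw]
          exact hτ.1 v hv h
      · intro v hv
        rw [hreachw] at hv
        by_cases hvw : v = w
        · exfalso; apply hv; rw [hvw]; exact ⟨hw, Set.mem_insert _ _⟩
        · rw [hσv v hvw]
          exact hτ.2 v (fun hc => hv ⟨hc.1, Set.mem_insert_of_mem _ hc.2⟩)
    · have : Function.update σ w w = τ := by
        funext v
        by_cases hvw : v = w
        · rw [hvw, Function.update_self, hτw]
        · rw [Function.update_of_ne hvw, hσv v hvw]
      simp only [Sigma.mk.inj_iff, heq_eq_eq]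
      exact ⟨hσw, this⟩

end Card
section CardA

variable {T}

/-- Combine a family of sub-strategies with (descendant-)disjoint supports. -/
noncomputable def combine (T : EFTree V) (s : Finset V) (g : ∀ u ∈ s, V → V) : V → V :=
  fun v =>
    if h : ∃ p : {u // u ∈ s}, v ∈ T.N ∧ v ∈ T.reachFrom p.1 (g p.1 p.2) then
      g h.choose.1 h.choose.2 v
    else v

variable {s : Finset V} {g : ∀ u ∈ s, V → V}

lemma combine_eq_of
    (huniq : ∀ p q : {u // u ∈ s}, ∀ v : V, v ∈ T.reachFrom p.1 (g p.1 p.2) →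
      v ∈ T.reachFrom q.1 (g q.1 q.2) → p = q)
    {u v : V} (hu : u ∈ s) (hv : v ∈ T.N) (hr : v ∈ T.reachFrom u (g u hu)) :
    combine T s g v = g u hu v := by
  have hex : ∃ p : {u // u ∈ s}, v ∈ T.N ∧ v ∈ T.reachFrom p.1 (g p.1 p.2) :=
    ⟨⟨u, hu⟩, hv, hr⟩
  rw [combine, dif_pos hex]
  have hpq : hex.choose = ⟨u, hu⟩ := huniq _ _ v hex.choose_spec.2 hr
  have key : ∀ (p : {u // u ∈ s}) (h : p = (⟨u, hu⟩ : {u // u ∈ s})),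
      g p.1 p.2 v = g u hu v := by
    rintro p rfl
    rfl
  exact key _ hpq

lemma combine_eq_self {v : V}
    (h : ¬ ∃ p : {u // u ∈ s}, v ∈ T.N ∧ v ∈ T.reachFrom p.1 (g p.1 p.2)) :
    combine T s g v = v := by
  rw [combine, dif_neg h]

lemma card_Sfin_A {a : V} (ha : a ∈ T.A) :
    (Sfin T a).card = ∏ u ∈ (T.children a).filter (· ∈ T.N), (Sfin T u).card := by
  set s : Finset V := (T.children a).filter (· ∈ T.N) with hs
  rw [← Finset.card_pi]
  apply Finset.card_bij (fun σ _ => fun u (_ : u ∈ s) => proj T u σ)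
  · -- membership
    intro σ hσ
    rw [mem_Sfin] at hσ
    rw [Finset.mem_pi]
    intro u hu
    rw [hs, Finset.mem_filter] at hu
    have hur : u ∈ T.reachFrom a σ :=
      (reach_closed a σ).2.2 a ha (self_mem_reach a σ) u hu.1
    exact proj_mem_Sfin (proper_mono hσ.1 hur)
  · -- injectivity
    intro σ hσ τ hτ heq
    rw [mem_Sfin] at hσ hτ
    have hreq : ∀ u ∈ T.children a, T.reachFrom u σ = T.reachFrom u τ := by
      intro u hu
      by_cases huN : u ∈ T.N
      · have hus : u ∈ s := by rw [hs, Finset.mem_filter]; exact ⟨hu, huN⟩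
        have := congrFun (congrFun heq u) hus
        calc T.reachFrom u σ = T.reachFrom u (proj T u σ) := (reach_proj u σ).symm
          _ = T.reachFrom u (proj T u τ) := by rw [this]
          _ = T.reachFrom u τ := reach_proj u τ
      · have huA : u ∉ T.A := T.child_of_A_not_A ha hu
        rw [reach_leaf huN huA, reach_leaf huN huA]
    have hra : T.reachFrom a σ = T.reachFrom a τ := by
      rw [reach_decomp_A ha σ, reach_decomp_A ha τ]
      congr 1
      exact Set.iUnion₂_congr hreq
    funext v
    by_cases hv : v ∈ T.N ∧ v ∈ T.reachFrom a σ
    · obtain ⟨hvN, hvr⟩ := hv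
      rw [reach_decomp_A ha σ] at hvr
      rcases hvr with h | h
      · rw [h] at hvN
        exact absurd hvN (Finset.disjoint_right.mp T.disj ha)
      · simp only [Set.mem_iUnion] at h
        obtain ⟨u, hu, hr⟩ := h
        have huN : u ∈ T.N := by
          by_contra huN
          have huA : u ∉ T.A := T.child_of_A_not_A ha hu
          rw [reach_leaf huN huA, Set.mem_singleton_iff] at hr
          rw [hr] at hvN
          exact huN hvN
        have hus : u ∈ s := by rw [hs, Finset.mem_filter]; exact ⟨hu, huN⟩
        have hproj := congrFun (congrFun (congrFun heq u) hus) v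
        simp only [proj] at hproj
        rw [if_pos ⟨hvN, hr⟩,
          if_pos ⟨hvN, show v ∈ T.reachFrom u τ by rw [← hreq u hu]; exact hr⟩] at hproj
        exact hproj
    · rw [hσ.2 v hv, hτ.2 v (fun hc => hv ⟨hc.1, hra ▸ hc.2⟩)]
  · -- surjectivity
    intro g hg
    rw [Finset.mem_pi] at hg
    have hgS : ∀ (u : V) (hu : u ∈ s), T.IsRedSubStrat u (g u hu) := by
      intro u hu
      exact mem_Sfin.mp (hg u hu)
    have huniq : ∀ p q : {u // u ∈ s}, ∀ v : V, v ∈ T.reachFrom p.1 (g p.1 p.2) →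
        v ∈ T.reachFrom q.1 (g q.1 q.2) → p = q := by
      intro p q v hp hq
      by_contra hne
      have hne' : p.1 ≠ q.1 := fun hc => hne (Subtype.ext hc)
      have hps : p.1 ∈ T.children a := (Finset.mem_filter.mp p.2).1
      have hqs : q.1 ∈ T.children a := (Finset.mem_filter.mp q.2).1
      exact sibling_reach_disjoint hps hqs hne' (hgS p.1 p.2).1 (hgS q.1 q.2).1 hp hq
    set σ := combine T s g with hσdef
    have hreach : ∀ (u : V) (hu : u ∈ s), T.reachFrom u σ = T.reachFrom u (g u hu) := by
      intro u hu
      exact reach_congr fun v hv hvr => combine_eq_of huniq hu hv hvr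
    have hreacha : T.reachFrom a σ =
        insert a (⋃ u ∈ T.children a, T.reachFrom u σ) := reach_decomp_A ha σ
    have hmemr : ∀ (u : V), u ∈ T.children a → T.reachFrom u σ ⊆ T.reachFrom a σ :=
      fun u hu => reach_mono ((reach_closed a σ).2.2 a ha (self_mem_reach a σ) u hu)
    have hmain : ∀ v : V, v ∈ T.N → v ∈ T.reachFrom a σ →
        ∃ (u : V) (hu : u ∈ s), v ∈ T.reachFrom u (g u hu) := by
      intro v hvN hvr
      rw [hreacha] at hvr
      rcases hvr with h | h
      · rw [h] at hvN
        exact absurd hvN (Finset.disjoint_right.mp T.disj ha)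
      · simp only [Set.mem_iUnion] at h
        obtain ⟨u, hu, hr⟩ := h
        have huN : u ∈ T.N := by
          by_contra huN
          have huA : u ∉ T.A := T.child_of_A_not_A ha hu
          rw [reach_leaf huN huA, Set.mem_singleton_iff] at hr
          rw [hr] at hvN
          exact huN hvN
        have hus : u ∈ s := by rw [hs, Finset.mem_filter]; exact ⟨hu, huN⟩
        rw [hreach u hus] at hr
        exact ⟨u, hus, hr⟩
    have hσS : T.IsRedSubStrat a σ := by
      constructor
      · intro v hv hvr
        obtain ⟨u, hu, hr⟩ := hmain v hv hvr
        have h2 : σ v = g u hu v := combine_eq_of huniq hu hv hr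
        rw [h2]
        exact (hgS u hu).1 v hv hr
      · intro v hv
        apply combine_eq_self
        rintro ⟨p, hpN, hpr⟩
        apply hv
        refine ⟨hpN, ?_⟩
        have hps : p.1 ∈ T.children a := (Finset.mem_filter.mp p.2).1
        apply hmemr p.1 hps
        rw [hreach p.1 p.2]
        exact hpr
    refine ⟨σ, mem_Sfin.mpr hσS, ?_⟩
    funext u hu
    funext v
    show proj T u σ v = g u hu v
    simp only [proj]
    by_cases hv : v ∈ T.N ∧ v ∈ T.reachFrom u σ
    · rw [if_pos hv]
      exact combine_eq_of huniq hu hv.1 (by rw [← hreach u hu]; exact hv.2)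
    · rw [if_neg hv]
      refine ((hgS u hu).2 v ?_).symm
      intro hc
      exact hv ⟨hc.1, by rw [hreach u hu]; exact hc.2⟩

end CardA
section Main

variable {T}
variable {n : V → ℕ}

lemma card_Sfin_eq_n (hnA : ∀ a ∈ T.A, n a = ∏ v ∈ (T.children a).filter (· ∈ T.N), n v)
    (hnN : ∀ v ∈ T.N, n v = ∑ a ∈ T.children v, n a) :
    ∀ w : V, w ∈ T.N ∨ w ∈ T.A → (Sfin T w).card = n w := by
  suffices h : ∀ k : ℕ, ∀ w : V, Fintype.card V ≤ T.depth w + k →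
      (w ∈ T.N ∨ w ∈ T.A → (Sfin T w).card = n w) by
    intro w hw
    exact h (Fintype.card V) w (by omega) hw
  intro k
  induction k with
  | zero =>
    intro w hw
    have := T.depth_lt_card w
    omega
  | succ k ih =>
    intro w hw hmem
    have hchild : ∀ u ∈ T.children w, Fintype.card V ≤ T.depth u + k := by
      intro u hu
      rw [T.mem_children] at hu
      have := T.depth_parent u hu.1
      rw [hu.2] at this
      omega
    rcases hmem with hN | hA
    · rw [card_Sfin_N hN, hnN w hN]
      apply Finset.sum_congr rfl
      intro a ha
      exact ih a (hchild a ha) (Or.inr (T.child_of_N hN ha))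
    · rw [card_Sfin_A hA, hnA w hA]
      apply Finset.prod_congr rfl
      intro u hu
      rw [Finset.mem_filter] at hu
      exact ih u (hchild u (hu.1)) (Or.inl hu.2)

end Main

end EFTree

theorem stmt8 {V : Type*} [Fintype V] [DecidableEq V] (T : EFTree V)
    (n : V → ℕ)
    (hnA : ∀ a ∈ T.A, n a = ∏ v ∈ (T.children a).filter (· ∈ T.N), n v)
    (hnN : ∀ v ∈ T.N, n v = ∑ a ∈ T.children v, n a)
    (σ : V → V) (hσ : T.IsRedStrat σ) :
    (∑ a ∈ T.Aset σ, Real.log ((n a : ℝ) / (n (T.parent a) : ℝ)) =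
        -Real.log (n T.root : ℝ)) ∧
    ∏ a ∈ T.Aset σ, ((n a : ℝ) / (n (T.parent a) : ℝ)) =
        1 / (Nat.card {σ : V → V // T.IsRedStrat σ} : ℝ) := by
  have hProper : EFTree.Proper T T.root σ := hσ.1
  have hAset : T.Aset σ = T.AsetFrom T.root σ := rfl
  have hprod : ∏ a ∈ T.Aset σ, ((n a : ℝ) / (n (T.parent a) : ℝ)) =
      1 / (n T.root : ℝ) := by
    rw [hAset]
    exact EFTree.prod_ratio hnA hnN (Fintype.card V) T.root T.root_N σ hProper
      (by rw [T.depth_root]; omega)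
  have hcard : Nat.card {σ : V → V // T.IsRedStrat σ} = n T.root := by
    rw [← EFTree.card_Sfin_eq_n hnA hnN T.root (Or.inl T.root_N)]
    rw [Nat.card_eq_fintype_card, Fintype.card_subtype]
    rfl
  have hroot_pos : 1 ≤ n T.root := EFTree.n_pos hnA hnN T.root (Or.inl T.root_N)
  constructor
  · have hne : ∀ a ∈ T.Aset σ, ((n a : ℝ) / (n (T.parent a) : ℝ)) ≠ 0 := by
      intro a ha
      simp only [EFTree.Aset, Finset.mem_filter] at ha
      have h1 : 1 ≤ n a := EFTree.n_pos hnA hnN a (Or.inr ha.1)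
      have h2 : 1 ≤ n (T.parent a) :=
        EFTree.n_pos hnA hnN (T.parent a) (Or.inl (T.parent_mem_N ha.1).2)
      have h1' : (0:ℝ) < (n a : ℝ) := by exact_mod_cast h1
      have h2' : (0:ℝ) < (n (T.parent a) : ℝ) := by exact_mod_cast h2
      positivity
    rw [← Real.log_prod hne, hprod]
    rw [one_div, Real.log_inv]
  · rw [hprod, hcard]
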